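/- Let A ∈ ℝ^{n×n}, B ∈ ℝ^{n×m}, U₀ ∈ ℝ^{m×T}, and let X₀, X₁ ∈ ℝ^{n×T} satisfy X₁ = B U₀ + A X₀, with M := [U₀; X₀] ∈ ℝ^{(m+n)×T} of rank n+m. Let (X̄₀^L)_{L∈ℕ} and (X̄₁^L)_{L∈ℕ} be sequences of matrices in ℝ^{n×T} converging entrywise to X₀ and X₁ respectively, and set M_L := [U₀; X̄₀^L]. Then for all sufficiently large L the matrix M_L M_Lᵀ is invertible, and defining ξ_d^L := X̄₁^L M_Lᵀ (M_L M_Lᵀ)^{-1} [0_{m×n}; I_n] and γ_d^L := X̄₁^L M_Lᵀ (M_L M_Lᵀ)^{-1} [I_m; 0_{n×m}], one has ξ_d^L → A and γ_d^L → B entrywise as L → ∞. Consequently, all matrices of the data-driven explicit predictive controller built from the averaged data converge to their noiseless counterparts. -/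

import Mathlib

open Matrix Filter

lemma aux_tendsto_mul {a b c : Type*} [Fintype b] {f : ℕ → Matrix a b ℝ} {g : ℕ → Matrix b c ℝ}
    {F : Matrix a b ℝ} {G : Matrix b c ℝ}
    (hf : Tendsto f atTop (nhds F)) (hg : Tendsto g atTop (nhds G)) :
    Tendsto (fun L => f L * g L) atTop (nhds (F * G)) :=
  ((Continuous.matrix_mul (continuous_fst) (continuous_snd)).tendsto (F, G)).comp
    (hf.prodMk_nhds hg)

lemma aux_isUnit {k : Type*} [Fintype k] [DecidableEq k] (G : Matrix k k ℝ)
    (h : G.rank = Fintype.card k) : IsUnit G := by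
  rw [← Matrix.mulVec_surjective_iff_isUnit, ← Matrix.coe_mulVecLin]
  apply LinearMap.range_eq_top.mp
  apply Submodule.eq_top_of_finrank_eq
  rw [show Module.finrank ℝ (LinearMap.range G.mulVecLin) = G.rank from rfl, h,
    Module.finrank_pi]

/-- **Asymptotic model/noisy-data equivalence.**
Let the noiseless data satisfy `X₁ = B U₀ + A X₀` with `M = [U₀; X₀]` of rank
`n + m`, and let averaged data matrices `X̄₀^L, X̄₁^L` converge entrywise to
`X₀, X₁`.  Then for all sufficiently large `L` the matrix `M_L M_Lᵀ` (with
`M_L = [U₀; X̄₀^L]`) is invertible, and the data-driven matrices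
`ξ_d^L := X̄₁^L M_Lᵀ (M_L M_Lᵀ)⁻¹ [0; Iₙ]` and
`γ_d^L := X̄₁^L M_Lᵀ (M_L M_Lᵀ)⁻¹ [Iₘ; 0]` converge entrywise to `A` and `B`
respectively, so all matrices of the data-driven explicit predictive controller
built from the averaged data converge to their noiseless counterparts. -/
theorem stmt_15 (n m T : ℕ)
    (A : Matrix (Fin n) (Fin n) ℝ) (B : Matrix (Fin n) (Fin m) ℝ)
    (U0 : Matrix (Fin m) (Fin T) ℝ) (X0 X1 : Matrix (Fin n) (Fin T) ℝ)
    (hdata : X1 = B * U0 + A * X0)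
    (hrank : (Matrix.fromRows U0 X0).rank = n + m)
    (X0L X1L : ℕ → Matrix (Fin n) (Fin T) ℝ)
    (hX0 : ∀ (i : Fin n) (j : Fin T),
      Tendsto (fun L : ℕ => X0L L i j) atTop (nhds (X0 i j)))
    (hX1 : ∀ (i : Fin n) (j : Fin T),
      Tendsto (fun L : ℕ => X1L L i j) atTop (nhds (X1 i j))) :
    (∀ᶠ L : ℕ in atTop,
        IsUnit (Matrix.fromRows U0 (X0L L) * (Matrix.fromRows U0 (X0L L))ᵀ))
    ∧ (∀ (i : Fin n) (j : Fin n),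
        Tendsto (fun L : ℕ =>
          (X1L L * (Matrix.fromRows U0 (X0L L))ᵀ
            * (Matrix.fromRows U0 (X0L L) * (Matrix.fromRows U0 (X0L L))ᵀ)⁻¹
            * Matrix.fromRows (0 : Matrix (Fin m) (Fin n) ℝ)
                (1 : Matrix (Fin n) (Fin n) ℝ)) i j)
          atTop (nhds (A i j)))
    ∧ (∀ (i : Fin n) (j : Fin m),
        Tendsto (fun L : ℕ =>
          (X1L L * (Matrix.fromRows U0 (X0L L))ᵀ
            * (Matrix.fromRows U0 (X0L L) * (Matrix.fromRows U0 (X0L L))ᵀ)⁻¹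
            * Matrix.fromRows (1 : Matrix (Fin m) (Fin m) ℝ)
                (0 : Matrix (Fin n) (Fin m) ℝ)) i j)
          atTop (nhds (B i j))) := by
  set M := Matrix.fromRows U0 X0 with hM
  set ML : ℕ → Matrix (Fin m ⊕ Fin n) (Fin T) ℝ := fun L => Matrix.fromRows U0 (X0L L)
    with hMLdef
  have hML : Tendsto ML atTop (nhds M) := by
    apply tendsto_pi_nhds.mpr
    intro i
    rw [tendsto_pi_nhds]
    intro j
    cases i with
    | inl i =>
      simpa [ML, M, Matrix.fromRows_apply_inl] using
        (tendsto_const_nhds : Tendsto (fun _ : ℕ => U0 i j) atTop (nhds (U0 i j)))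
    | inr i =>
      simpa [ML, M, Matrix.fromRows_apply_inr] using hX0 i j
  have hX1' : Tendsto X1L atTop (nhds X1) := by
    apply tendsto_pi_nhds.mpr
    intro i
    rw [tendsto_pi_nhds]
    intro j
    exact hX1 i j
  set G := M * Mᵀ with hG
  have hGunit : IsUnit G := by
    apply aux_isUnit
    rw [hG, Matrix.rank_self_mul_transpose, hrank]
    simp [add_comm]
  have hGdet : IsUnit G.det := (Matrix.isUnit_iff_isUnit_det G).mp hGunit
  have hdetG : G.det ≠ 0 := hGdet.ne_zero
  have hMLT : Tendsto (fun L => (ML L)ᵀ) atTop (nhds Mᵀ) :=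
    ((continuous_id.matrix_transpose).tendsto M).comp hML
  have hGL : Tendsto (fun L => ML L * (ML L)ᵀ) atTop (nhds G) := aux_tendsto_mul hML hMLT
  have hdetT : Tendsto (fun L => (ML L * (ML L)ᵀ).det) atTop (nhds G.det) :=
    ((continuous_id.matrix_det).tendsto G).comp hGL
  have hev : ∀ᶠ L : ℕ in atTop, IsUnit (ML L * (ML L)ᵀ) := by
    filter_upwards [hdetT.eventually_ne hdetG] with L hL
    exact (Matrix.isUnit_iff_isUnit_det _).mpr (isUnit_iff_ne_zero.mpr hL)
  have hinv : Tendsto (fun L => (ML L * (ML L)ᵀ)⁻¹) atTop (nhds G⁻¹) := by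
    simp only [Matrix.inv_def, Ring.inverse_eq_inv']
    exact (hdetT.inv₀ hdetG).smul (((continuous_id.matrix_adjugate).tendsto G).comp hGL)
  have hfull : Tendsto (fun L => X1L L * (ML L)ᵀ * (ML L * (ML L)ᵀ)⁻¹) atTop
      (nhds (X1 * Mᵀ * G⁻¹)) :=
    aux_tendsto_mul (aux_tendsto_mul hX1' hMLT) hinv
  have key : X1 * Mᵀ * G⁻¹ = Matrix.fromCols B A := by
    have hX1eq : X1 = Matrix.fromCols B A * M := by
      rw [hM, Matrix.fromCols_mul_fromRows, hdata]
    rw [hX1eq, Matrix.mul_assoc (Matrix.fromCols B A) M Mᵀ, ← hG, Matrix.mul_assoc,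
      Matrix.mul_nonsing_inv G hGdet, Matrix.mul_one]
  rw [key] at hfull
  refine ⟨hev, fun i j => ?_, fun i j => ?_⟩
  · have hA : Tendsto (fun L => X1L L * (ML L)ᵀ * (ML L * (ML L)ᵀ)⁻¹
        * Matrix.fromRows (0 : Matrix (Fin m) (Fin n) ℝ) (1 : Matrix (Fin n) (Fin n) ℝ))
        atTop (nhds (Matrix.fromCols B A
          * Matrix.fromRows (0 : Matrix (Fin m) (Fin n) ℝ) (1 : Matrix (Fin n) (Fin n) ℝ))) :=
      aux_tendsto_mul hfull tendsto_const_nhds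
    rw [Matrix.fromCols_mul_fromRows] at hA
    simp only [Matrix.mul_zero, Matrix.mul_one, zero_add] at hA
    exact ((continuous_id.matrix_elem i j).tendsto A).comp hA
  · have hB : Tendsto (fun L => X1L L * (ML L)ᵀ * (ML L * (ML L)ᵀ)⁻¹
        * Matrix.fromRows (1 : Matrix (Fin m) (Fin m) ℝ) (0 : Matrix (Fin n) (Fin m) ℝ))
        atTop (nhds (Matrix.fromCols B A
          * Matrix.fromRows (1 : Matrix (Fin m) (Fin m) ℝ) (0 : Matrix (Fin n) (Fin m) ℝ))) :=
      aux_tendsto_mul hfull tendsto_const_nhds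
    rw [Matrix.fromCols_mul_fromRows] at hB
    simp only [Matrix.mul_zero, Matrix.mul_one, add_zero] at hB
    exact ((continuous_id.matrix_elem i j).tendsto B).comp hB
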